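/- arXiv:2511.04345 — 2 statements merged into one kernel-verified Lean document; each statement's English description precedes it below -/
import Mathlib

section
/- Let G be a positively weighted directed graph, u a vertex with d(s,t) < d(s,u)+d(u,t) < ∞, and G' the graph obtained by the vertex-elimination construction (deleting u and connecting in-neighbors to out-neighbors with weight min(w(x,y), w(x,u)+w(u,y))). For any x-to-y path P in G with x,y ≠ u, there is an x-to-y path P' in G' with w'(P') ≤ w(P); conversely, for any x-to-y path P' in G' there is an x-to-y path P in G with w(P) ≤ w'(P'). -/
variable {V : Type*}

/-- Total weight of a walk given as a list of vertices. -/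
def walkWt (w : V → V → ℝ) : List V → ℝ
  | [] => 0
  | [_] => 0
  | a :: b :: rest => w a b + walkWt w (b :: rest)

/-- The list of (directed) edges traversed by a walk. -/
def listEdges : List V → List (V × V)
  | [] => []
  | [_] => []
  | a :: b :: rest => (a, b) :: listEdges (b :: rest)

/-- `l` is a walk from `u` to `v` in the digraph with edge relation `E`. -/
def IsWalkFrom (E : V → V → Prop) (u v : V) (l : List V) : Prop :=
  l.Chain' E ∧ l.head? = some u ∧ l.getLast? = some v

/-- `l` is a (simple) path from `u` to `v`. -/
def IsPathFrom (E : V → V → Prop) (u v : V) (l : List V) : Prop :=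
  IsWalkFrom E u v l ∧ l.Nodup

/-- `d` is the shortest-path distance function of `(E, w)`: it lower-bounds the weight of
every path, and is achieved by some path whenever some path exists. -/
def IsDistFn (E : V → V → Prop) (w : V → V → ℝ) (d : V → V → ℝ) : Prop :=
  (∀ u v l, IsPathFrom E u v l → d u v ≤ walkWt w l) ∧
  (∀ u v, (∃ l, IsPathFrom E u v l) → ∃ l, IsPathFrom E u v l ∧ walkWt w l = d u v)

/-- All edge weights are (strictly) positive. -/
def PosWeights (E : V → V → Prop) (w : V → V → ℝ) : Prop :=
  ∀ u v, E u v → 0 < w u v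

/-- A back-edge relative to source `s`: `d(s,u) + w(u,v) > d(s,v)`. -/
def IsBackEdge (E : V → V → Prop) (w : V → V → ℝ) (d : V → V → ℝ) (s : V) (p : V × V) : Prop :=
  E p.1 p.2 ∧ d s p.2 < d s p.1 + w p.1 p.2

/-- A forward-edge relative to source `s`: `d(s,u) + w(u,v) = d(s,v)`. -/
def IsForwardEdge (E : V → V → Prop) (w : V → V → ℝ) (d : V → V → ℝ) (s : V) (p : V × V) : Prop :=
  E p.1 p.2 ∧ d s p.1 + w p.1 p.2 = d s p.2

/-- A forward path: all its edges are forward-edges. -/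
def IsForwardPath (E : V → V → Prop) (w : V → V → ℝ) (d : V → V → ℝ) (s : V) (l : List V) : Prop :=
  ∀ p ∈ listEdges l, IsForwardEdge E w d s p

/-- `(s,t)`-straight graph: every vertex lies on a shortest `s → t` path. -/
def IsStraight (E : V → V → Prop) (w : V → V → ℝ) (d : V → V → ℝ) (s t : V) : Prop :=
  (∀ u, d s u + d u t = d s t) ∧
  (∀ u, ∃ l, IsPathFrom E s t l ∧ u ∈ l ∧ walkWt w l = d s t)

/-- `(s,t)`-layered graph. -/
def IsLayered (E : V → V → Prop) (w : V → V → ℝ) (d : V → V → ℝ) (s t : V) : Prop :=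
  IsStraight E w d s t ∧
  (∀ u v, E u v → d s u ≠ d s v) ∧
  (∀ u v, E u v → d s u < d s v → ∀ x, d s x ≤ d s u ∨ d s u + w u v ≤ d s x)

/-- The layer of `u`: the rank of `d(s,u)` among the distinct values of `d(s,·)`. -/
noncomputable def layer [Fintype V] (d : V → V → ℝ) (s : V) (u : V) : ℕ :=
  ((Finset.univ.image (fun x : V => d s x)).filter (fun p => p ≤ d s u)).card

/-- An `s → t` not-shortest path. -/
def IsNotShortest (E : V → V → Prop) (w : V → V → ℝ) (d : V → V → ℝ) (s t : V)
    (l : List V) : Prop :=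
  IsPathFrom E s t l ∧ d s t < walkWt w l

/-- An `s → t` next-to-shortest path: a not-shortest path of minimum weight. -/
def IsNextToShortest (E : V → V → Prop) (w : V → V → ℝ) (d : V → V → ℝ) (s t : V)
    (l : List V) : Prop :=
  IsNotShortest E w d s t l ∧ ∀ l', IsNotShortest E w d s t l' → walkWt w l ≤ walkWt w l'

/-- Back-edge decomposition of a path `l = l1 ∘ l0 ∘ l2`, where `l0` runs from `A` to `B`,
starting with the first back-edge of `l` and ending with the last one. -/
def IsBEDecomp (E : V → V → Prop) (w : V → V → ℝ) (d : V → V → ℝ) (s t : V)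
    (l l1 l0 l2 : List V) (A B : V) : Prop :=
  IsPathFrom E s A l1 ∧ IsPathFrom E A B l0 ∧ IsPathFrom E B t l2 ∧
  l = l1 ++ l0.tail ++ l2.tail ∧
  (∀ p ∈ listEdges l1, ¬ IsBackEdge E w d s p) ∧
  (∀ p ∈ listEdges l2, ¬ IsBackEdge E w d s p) ∧
  (∃ p, (listEdges l0).head? = some p ∧ IsBackEdge E w d s p) ∧
  (∃ p, (listEdges l0).getLast? = some p ∧ IsBackEdge E w d s p)

/-- Extended-real shortest-path distance: `⊤` when no path exists. -/
noncomputable def eDist (E : V → V → Prop) (w : V → V → ℝ) (x y : V) : EReal :=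
  sInf {c : EReal | ∃ l, IsPathFrom E x y l ∧ c = ((walkWt w l : ℝ) : EReal)}

/-- Edge relation after eliminating the vertex `u`. -/
def elimE (E : V → V → Prop) (u : V) (x y : V) : Prop :=
  (E x y ∧ x ≠ u ∧ y ≠ u) ∨ (E x u ∧ E u y ∧ x ≠ y)

open Classical in
/-- Weights after eliminating `u`. -/
noncomputable def elimW (E : V → V → Prop) (w : V → V → ℝ) (u : V) (x y : V) : ℝ :=
  if E x u ∧ E u y ∧ x ≠ y then
    (if E x y then min (w x y) (w x u + w u y) else w x u + w u y)
  else w x y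

theorem listEdges_append (l1 : List V) (a : V) (l2 : List V) :
    listEdges (l1 ++ a :: l2) = listEdges (l1 ++ [a]) ++ listEdges (a :: l2) := by
  induction l1 with
  | nil => simp [listEdges]
  | cons c l1 ih =>
    cases l1 with
    | nil => cases l2 <;> simp [listEdges]
    | cons d l1 => simpa [listEdges] using ih

theorem walkWt_eq_sum (w : V → V → ℝ) (l : List V) :
    walkWt w l = ((listEdges l).map (fun p => w p.1 p.2)).sum := by
  induction l with
  | nil => simp [walkWt, listEdges]
  | cons a l ih =>
    cases l with
    | nil => simp [walkWt, listEdges]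
    | cons b rest => simpa [walkWt, listEdges] using ih

theorem chain'_iff_edges (E : V → V → Prop) (l : List V) :
    l.Chain' E ↔ ∀ p ∈ listEdges l, E p.1 p.2 := by
  induction l with
  | nil => simp [listEdges]; exact List.isChain_nil
  | cons a l ih =>
    cases l with
    | nil => simp [listEdges]; exact List.isChain_singleton a
    | cons b rest =>
      rw [show List.Chain' E (a :: b :: rest) ↔ E a b ∧ List.Chain' E (b :: rest) from List.isChain_cons_cons, ih]
      simp only [listEdges, List.mem_cons]
      constructor
      · rintro ⟨h1, h2⟩ p hp
        rcases hp with rfl | hp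
        · exact h1
        · exact h2 p hp
      · intro h
        exact ⟨h (a,b) (Or.inl rfl), fun p hp => h p (Or.inr hp)⟩

theorem mem_of_edge {l : List V} {p : V × V} (hp : p ∈ listEdges l) : p.1 ∈ l ∧ p.2 ∈ l := by
  induction l with
  | nil => simp [listEdges] at hp
  | cons a l ih =>
    cases l with
    | nil => simp [listEdges] at hp
    | cons b rest =>
      simp only [listEdges, List.mem_cons] at hp
      rcases hp with rfl | hp
      · simp
      · have := ih hp; exact ⟨by simp [this.1], by simp [this.2]⟩

section
variable {E : V → V → Prop} {w : V → V → ℝ} {u : V}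

theorem elimE_ne (hs : ∀ v, ¬ E v v) {a b : V} (h : elimE E u a b) : a ≠ u ∧ b ≠ u := by
  rcases h with ⟨_, h1, h2⟩ | ⟨h1, h2, _⟩
  · exact ⟨h1, h2⟩
  · constructor
    · rintro rfl; exact hs _ h1
    · rintro rfl; exact hs _ h2

theorem elimW_le {a b : V} (h : E a b) : elimW E w u a b ≤ w a b := by
  unfold elimW
  split_ifs with h1
  · exact min_le_left _ _
  · exact le_refl _

theorem elimW_le_detour {a b : V} (h1 : E a u) (h2 : E u b) (h3 : a ≠ b) :
    elimW E w u a b ≤ w a u + w u b := by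
  unfold elimW
  split_ifs with hc hE
  · exact min_le_right _ _
  · exact le_refl _
  · exact absurd ⟨h1, h2, h3⟩ hc

theorem elimW_pos (hpos : PosWeights E w) {a b : V} (h : elimE E u a b) :
    0 < elimW E w u a b := by
  have hab : E a b ∨ (E a u ∧ E u b ∧ a ≠ b) := by
    rcases h with ⟨he, _, _⟩ | ⟨h1, h2, h3⟩
    exacts [Or.inl he, Or.inr ⟨h1, h2, h3⟩]
  unfold elimW
  split
  · rename_i hsc
    split
    · exact lt_min (hpos _ _ ‹_›) (add_pos (hpos _ _ hsc.1) (hpos _ _ hsc.2.1))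
    · exact add_pos (hpos _ _ hsc.1) (hpos _ _ hsc.2.1)
  · rename_i hsc
    rcases hab with he | hsc'
    · exact hpos _ _ he
    · exact absurd hsc' hsc

theorem bad_edge {a b : V} (he : elimE E u a b)
    (hbad : ¬ (E a b ∧ w a b ≤ elimW E w u a b)) :
    E a u ∧ E u b ∧ a ≠ b ∧ elimW E w u a b = w a u + w u b := by
  by_cases hsc : E a u ∧ E u b ∧ a ≠ b
  · refine ⟨hsc.1, hsc.2.1, hsc.2.2, ?_⟩
    by_cases hE : E a b
    · have hthis : elimW E w u a b = min (w a b) (w a u + w u b) := by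
        unfold elimW; rw [if_pos hsc, if_pos hE]
      rcases min_cases (w a b) (w a u + w u b) with ⟨hmin, _⟩ | ⟨hmin, _⟩
      · exact absurd ⟨hE, (hthis.trans hmin).ge⟩ hbad
      · exact hthis.trans hmin
    · unfold elimW; rw [if_pos hsc, if_neg hE]
  · exfalso
    rcases he with ⟨hE, _, _⟩ | hsc'
    · refine hbad ⟨hE, ?_⟩
      unfold elimW; rw [if_neg hsc]
    · exact hsc hsc'

theorem not_mem_chain (hs : ∀ v, ¬ E v v) :
    ∀ (l : List V) (x : V), l.Chain' (elimE E u) → l.head? = some x → x ≠ u → u ∉ l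
  | [], x, _, hx, _ => by simp
  | [a], x, _, hx, hxu => by
      simp only [List.head?_cons, Option.some_inj] at hx
      subst hx
      simp only [List.mem_singleton]
      exact fun h => hxu h.symm
  | a :: b :: rest, x, hc, hx, hxu => by
      simp only [List.head?_cons, Option.some_inj] at hx
      subst hx
      simp only [List.Chain', List.isChain_cons_cons] at hc
      have hb := (elimE_ne hs hc.1).2
      have hrec := not_mem_chain hs (b :: rest) b hc.2 rfl hb
      simp only [List.mem_cons, not_or]
      exact ⟨fun h => hxu h.symm, by simpa using hrec⟩

theorem walkSum_append (f : V × V → ℝ) (l1 : List V) (a : V) (l2 : List V) :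
    ((listEdges (l1 ++ a :: l2)).map f).sum
      = ((listEdges (l1 ++ [a])).map f).sum + ((listEdges (a :: l2)).map f).sum := by
  rw [listEdges_append]; simp

theorem walkSum_cons (f : V × V → ℝ) (a b : V) (l : List V) :
    ((listEdges (a :: b :: l)).map f).sum = f (a, b) + ((listEdges (b :: l)).map f).sum := by
  simp [listEdges]

theorem sum_edges_nonneg {f : V × V → ℝ} {l : List V}
    (h : ∀ p ∈ listEdges l, 0 ≤ f p) : 0 ≤ ((listEdges l).map f).sum := by
  apply List.sum_nonneg
  intro x hx
  obtain ⟨p, hp, rfl⟩ := List.mem_map.mp hx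
  exact h p hp

theorem key (hpos : PosWeights E w) :
    ∀ m : List V, m.Chain' (elimE E u) →
    (∀ p ∈ listEdges m, E p.1 p.2 ∧ w p.1 p.2 ≤ elimW E w u p.1 p.2) ∨
    ∃ l1 a mid b l2, m = l1 ++ a :: (mid ++ b :: l2) ∧
      (∀ p ∈ listEdges (l1 ++ [a]), E p.1 p.2 ∧ w p.1 p.2 ≤ elimW E w u p.1 p.2) ∧
      (∀ p ∈ listEdges (b :: l2), E p.1 p.2 ∧ w p.1 p.2 ≤ elimW E w u p.1 p.2) ∧
      E a u ∧ E u b ∧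
      w a u + w u b ≤
        ((listEdges (a :: (mid ++ [b]))).map (fun p => elimW E w u p.1 p.2)).sum := by
  intro m
  induction m with
  | nil => intro _; left; intro p hp; simp [listEdges] at hp
  | cons v l ih =>
    intro hc
    cases l with
    | nil => left; intro p hp; simp [listEdges] at hp
    | cons c rest =>
      simp only [List.Chain', List.isChain_cons_cons] at hc
      rcases ih hc.2 with hall | ⟨l1', a', mid', b', l2', hm, hg1, hg2, hau, hub, hwt⟩
      · by_cases hg : E v c ∧ w v c ≤ elimW E w u v c
        · left
          intro p hp
          simp only [listEdges, List.mem_cons] at hp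
          rcases hp with rfl | hp
          · exact hg
          · exact hall p hp
        · obtain ⟨hvu, huc, hne, heq⟩ := bad_edge hc.1 hg
          right
          refine ⟨[], v, [], c, rest, by simp, ?_, hall, hvu, huc, ?_⟩
          · intro p hp; simp [listEdges] at hp
          · simp [listEdges, heq]
      · cases l1' with
        | nil =>
          simp only [List.nil_append] at hm
          obtain ⟨h1, h2⟩ := List.cons_eq_cons.mp hm
          subst h1; subst h2
          by_cases hg : E v c ∧ w v c ≤ elimW E w u v c
          · right
            refine ⟨[v], c, mid', b', l2', by simp, ?_, hg2, hau, hub, hwt⟩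
            intro p hp
            simp only [List.cons_append, List.nil_append, listEdges, List.mem_cons] at hp
            rcases hp with rfl | hp
            · exact hg
            · simp [listEdges] at hp
          · obtain ⟨hvu, huc, hne, heq⟩ := bad_edge hc.1 hg
            right
            refine ⟨[], v, c :: mid', b', l2', by simp, ?_, hg2, hvu, hub, ?_⟩
            · intro p hp; simp [listEdges] at hp
            · simp only [List.nil_append, List.cons_append]
              rw [walkSum_cons]
              have hf : elimW E w u (v, c).1 (v, c).2 = w v u + w u c := heq
              rw [hf]
              linarith [hwt, hpos u c huc, hpos c u hau]
        | cons e es =>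
          rw [List.cons_append] at hm
          obtain ⟨h1, h2⟩ := List.cons_eq_cons.mp hm
          subst h1; subst h2
          by_cases hg : E v c ∧ w v c ≤ elimW E w u v c
          · right
            refine ⟨v :: c :: es, a', mid', b', l2', by simp, ?_, hg2, hau, hub, hwt⟩
            intro p hp
            rw [show (v :: c :: es) ++ [a'] = v :: c :: (es ++ [a']) from by simp] at hp
            simp only [listEdges, List.mem_cons] at hp
            rcases hp with rfl | hp
            · exact hg
            · exact hg1 p (by simpa using hp)
          · obtain ⟨hvu, huc, hne, heq⟩ := bad_edge hc.1 hg
            right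
            refine ⟨[], v, (c :: es) ++ a' :: mid', b', l2', by simp, ?_, hg2, hvu, hub, ?_⟩
            · intro p hp; simp [listEdges] at hp
            · have goalEq : listEdges (v :: (((c :: es) ++ a' :: mid') ++ [b']))
                  = ((v, c) :: listEdges (c :: (es ++ [a'])))
                    ++ listEdges (a' :: (mid' ++ [b'])) := by
                rw [show v :: (((c :: es) ++ a' :: mid') ++ [b'])
                      = (v :: c :: es) ++ a' :: (mid' ++ [b']) from by simp,
                  listEdges_append,
                  show (v :: c :: es) ++ [a'] = v :: c :: (es ++ [a']) from by simp]
                rfl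
              rw [goalEq]
              simp only [List.map_append, List.map_cons, List.sum_append, List.sum_cons]
              have hS1 : 0 ≤ ((listEdges (c :: (es ++ [a']))).map
                  (fun p => elimW E w u p.1 p.2)).sum := by
                apply sum_edges_nonneg
                intro p hp
                have := hg1 p (by simpa using hp)
                exact le_of_lt (lt_of_lt_of_le (hpos _ _ this.1) this.2)
              have hf : elimW E w u (v, c).1 (v, c).2 = w v u + w u c := heq
              rw [hf]
              linarith [hwt, hpos u c huc, hpos a' u hau]

theorem dir1 (hsimple : ∀ v, ¬ E v v) (hpos : PosWeights E w)
    {x y : V} {l : List V} (hx : x ≠ u) (hy : y ≠ u)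
    (hch : l.Chain' E) (hhead : l.head? = some x) (hlast : l.getLast? = some y)
    (hnd : l.Nodup) :
    ∃ l', (l'.Chain' (elimE E u) ∧ l'.head? = some x ∧ l'.getLast? = some y) ∧ l'.Nodup ∧
      walkWt (elimW E w u) l' ≤ walkWt w l := by
  by_cases hu : u ∈ l
  · obtain ⟨l1, l2, rfl⟩ := List.append_of_mem hu
    have hl1 : l1 ≠ [] := by
      rintro rfl
      rw [List.nil_append, List.head?_cons] at hhead
      exact hx (Option.some_inj.mp hhead).symm
    have hl2 : l2 ≠ [] := by
      rintro rfl
      rw [List.getLast?_append_cons] at hlast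
      exact hy (Option.some_inj.mp hlast).symm
    obtain ⟨b, l2', rfl⟩ := List.exists_cons_of_ne_nil hl2
    obtain ⟨l1', a, rfl⟩ := (List.eq_nil_or_concat l1).resolve_left hl1
    rw [List.concat_eq_append] at *
    have hEdges : listEdges ((l1' ++ [a]) ++ u :: b :: l2')
        = (listEdges (l1' ++ [a]) ++ [(a, u)]) ++ ((u, b) :: listEdges (b :: l2')) := by
      rw [listEdges_append (l1' ++ [a]) u (b :: l2')]
      congr 1
      rw [show (l1' ++ [a]) ++ [u] = l1' ++ a :: [u] from by simp, listEdges_append l1' a [u]]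
      rfl
    have hE := (chain'_iff_edges E _).mp hch
    have hEau : E a u := by
      have := hE (a, u) (by rw [hEdges]; simp)
      exact this
    have hEub : E u b := by
      have := hE (u, b) (by rw [hEdges]; simp)
      exact this
    have hE1 : ∀ p ∈ listEdges (l1' ++ [a]), E p.1 p.2 := fun p hp =>
      hE p (by rw [hEdges]; simp [hp])
    have hE2 : ∀ p ∈ listEdges (b :: l2'), E p.1 p.2 := fun p hp =>
      hE p (by rw [hEdges]; simp [hp])
    have hdisj := (List.nodup_append'.mp hnd).2.2
    have hu1 : u ∉ l1' ++ [a] := fun h => hdisj h (by simp)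
    have hu2 : u ∉ b :: l2' := (List.nodup_cons.mp (List.nodup_append'.mp hnd).2.1).1
    have hab : a ≠ b := by
      intro h
      have hm1 : a ∈ l1' ++ [a] := by simp
      have hm2 : a ∈ u :: b :: l2' := by simp [h]
      exact hdisj hm1 hm2
    have hEdges' : listEdges ((l1' ++ [a]) ++ b :: l2')
        = (listEdges (l1' ++ [a]) ++ [(a, b)]) ++ listEdges (b :: l2') := by
      rw [listEdges_append (l1' ++ [a]) b l2']
      congr 1
      rw [show (l1' ++ [a]) ++ [b] = l1' ++ a :: [b] from by simp, listEdges_append l1' a [b]]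
      rfl
    refine ⟨(l1' ++ [a]) ++ b :: l2', ⟨?_, ?_, ?_⟩, ?_, ?_⟩
    · rw [chain'_iff_edges]
      intro p hp
      rw [hEdges'] at hp
      simp only [List.mem_append, List.mem_cons, List.not_mem_nil, or_false] at hp
      rcases hp with (hp | rfl) | hp
      · obtain ⟨hm1, hm2⟩ := mem_of_edge hp
        exact Or.inl ⟨hE1 p hp, fun h => hu1 (h ▸ hm1), fun h => hu1 (h ▸ hm2)⟩
      · exact Or.inr ⟨hEau, hEub, hab⟩
      · obtain ⟨hm1, hm2⟩ := mem_of_edge hp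
        exact Or.inl ⟨hE2 p hp, fun h => hu2 (h ▸ hm1), fun h => hu2 (h ▸ hm2)⟩
    · rw [List.head?_append_of_ne_nil _ (by simp : l1' ++ [a] ≠ [])]
      rw [List.head?_append_of_ne_nil _ (by simp : l1' ++ [a] ≠ [])] at hhead
      exact hhead
    · rw [List.getLast?_append_cons]
      rw [List.getLast?_append_cons, List.getLast?_cons_cons] at hlast
      exact hlast
    · exact hnd.sublist ((List.sublist_cons_self u (b :: l2')).append_left (l1' ++ [a]))
    · rw [walkWt_eq_sum, walkWt_eq_sum, hEdges, hEdges']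
      simp only [List.map_append, List.sum_append, List.map_cons, List.sum_cons,
        List.map_nil, List.sum_nil]
      have h1 : ((listEdges (l1' ++ [a])).map (fun p => elimW E w u p.1 p.2)).sum
          ≤ ((listEdges (l1' ++ [a])).map (fun p => w p.1 p.2)).sum :=
        List.sum_le_sum (fun p hp => elimW_le (hE1 p hp))
      have h2 : ((listEdges (b :: l2')).map (fun p => elimW E w u p.1 p.2)).sum
          ≤ ((listEdges (b :: l2')).map (fun p => w p.1 p.2)).sum :=
        List.sum_le_sum (fun p hp => elimW_le (hE2 p hp))
      have h3 : elimW E w u a b ≤ w a u + w u b := elimW_le_detour hEau hEub hab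
      linarith
  · refine ⟨l, ⟨?_, hhead, hlast⟩, hnd, ?_⟩
    · rw [chain'_iff_edges] at hch ⊢
      intro p hp
      obtain ⟨hm1, hm2⟩ := mem_of_edge hp
      exact Or.inl ⟨hch p hp, fun h => hu (h ▸ hm1), fun h => hu (h ▸ hm2)⟩
    · rw [walkWt_eq_sum, walkWt_eq_sum]
      exact List.sum_le_sum (fun p hp => elimW_le ((chain'_iff_edges E l).mp hch p hp))

theorem dir2 (hsimple : ∀ v, ¬ E v v) (hpos : PosWeights E w)
    {x y : V} {l' : List V} (hx : x ≠ u) (hy : y ≠ u)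
    (hch : l'.Chain' (elimE E u)) (hhead : l'.head? = some x) (hlast : l'.getLast? = some y)
    (hnd : l'.Nodup) :
    ∃ l, (l.Chain' E ∧ l.head? = some x ∧ l.getLast? = some y) ∧ l.Nodup ∧
      walkWt w l ≤ walkWt (elimW E w u) l' := by
  have humem : u ∉ l' := not_mem_chain hsimple l' x hch hhead hx
  rcases key hpos l' hch with hall | ⟨l1, a, mid, b, l2, rfl, hg1, hg2, hau, hub, hwt⟩
  · refine ⟨l', ⟨?_, hhead, hlast⟩, hnd, ?_⟩
    · rw [chain'_iff_edges]
      exact fun p hp => (hall p hp).1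
    · rw [walkWt_eq_sum, walkWt_eq_sum]
      exact List.sum_le_sum (fun p hp => (hall p hp).2)
  · have hEn : listEdges (l1 ++ a :: u :: b :: l2)
        = listEdges (l1 ++ [a]) ++ ((a, u) :: (u, b) :: listEdges (b :: l2)) := by
      rw [listEdges_append l1 a (u :: b :: l2)]
      rfl
    have hEo : listEdges (l1 ++ a :: (mid ++ b :: l2))
        = listEdges (l1 ++ [a]) ++ (listEdges ((a :: mid) ++ [b]) ++ listEdges (b :: l2)) := by
      rw [listEdges_append l1 a (mid ++ b :: l2)]
      congr 1
      rw [show a :: (mid ++ b :: l2) = (a :: mid) ++ b :: l2 from rfl,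
        listEdges_append (a :: mid) b l2]
    refine ⟨l1 ++ a :: u :: b :: l2, ⟨?_, ?_, ?_⟩, ?_, ?_⟩
    · rw [chain'_iff_edges]
      intro p hp
      rw [hEn] at hp
      simp only [List.mem_append, List.mem_cons] at hp
      rcases hp with hp | rfl | rfl | hp
      · exact (hg1 p hp).1
      · exact hau
      · exact hub
      · exact (hg2 p hp).1
    · have hh : ∀ (s t : List V), (l1 ++ a :: s).head? = (l1 ++ a :: t).head? := by
        intro s t; cases l1 <;> simp
      exact (hh (u :: b :: l2) (mid ++ b :: l2)).trans hhead
    · rw [List.getLast?_append_cons, List.getLast?_cons_cons, List.getLast?_cons_cons]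
      rw [List.getLast?_append_cons,
        show a :: (mid ++ b :: l2) = (a :: mid) ++ b :: l2 from rfl,
        List.getLast?_append_cons] at hlast
      exact hlast
    · have hsub : List.Sublist (l1 ++ a :: b :: l2) (l1 ++ a :: (mid ++ b :: l2)) :=
        List.Sublist.append_left (List.Sublist.cons₂ a (List.sublist_append_right mid (b :: l2))) l1
      have hnd0 := hnd.sublist hsub
      rw [show l1 ++ a :: u :: b :: l2 = (l1 ++ [a]) ++ u :: (b :: l2) from by simp,
        List.nodup_middle, List.nodup_cons]
      constructor
      · intro hmem
        apply humem
        rcases List.mem_append.mp hmem with hm | hm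
        · rcases List.mem_append.mp hm with hm | hm
          · exact List.mem_append.mpr (Or.inl hm)
          · simp only [List.mem_singleton] at hm
            subst hm
            simp
        · simp only [List.mem_cons] at hm
          rcases hm with rfl | hm
          · simp
          · exact List.mem_append.mpr (Or.inr (by simp [hm]))
      · rw [show (l1 ++ [a]) ++ b :: l2 = l1 ++ a :: b :: l2 from by simp]
        exact hnd0
    · rw [walkWt_eq_sum, walkWt_eq_sum, hEn, hEo]
      simp only [List.map_append, List.sum_append, List.map_cons, List.sum_cons]
      have h1 : ((listEdges (l1 ++ [a])).map (fun p => w p.1 p.2)).sum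
          ≤ ((listEdges (l1 ++ [a])).map (fun p => elimW E w u p.1 p.2)).sum :=
        List.sum_le_sum (fun p hp => (hg1 p hp).2)
      have h2 : ((listEdges (b :: l2)).map (fun p => w p.1 p.2)).sum
          ≤ ((listEdges (b :: l2)).map (fun p => elimW E w u p.1 p.2)).sum :=
        List.sum_le_sum (fun p hp => (hg2 p hp).2)
      have h3 := hwt
      rw [show a :: (mid ++ [b]) = (a :: mid) ++ [b] from rfl] at h3
      linarith

end

/-- paths map both ways between `G` and the elimination graph `G'` without
increasing weight. -/
theorem stmt7 [Fintype V] (E : V → V → Prop) (w : V → V → ℝ) (s t u : V)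
    (hsimple : ∀ v, ¬ E v v) (hpos : PosWeights E w)
    (h1 : eDist E w s t < eDist E w s u + eDist E w u t)
    (h2 : eDist E w s u + eDist E w u t < ⊤) :
    (∀ x y l, x ≠ u → y ≠ u → IsPathFrom E x y l →
      ∃ l', IsPathFrom (elimE E u) x y l' ∧
        walkWt (elimW E w u) l' ≤ walkWt w l) ∧
    (∀ x y l', x ≠ u → y ≠ u → IsPathFrom (elimE E u) x y l' →
      ∃ l, IsPathFrom E x y l ∧ walkWt w l ≤ walkWt (elimW E w u) l') := by
  constructor
  · intro x y l hx hy hl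
    obtain ⟨⟨hch, hhead, hlast⟩, hnd⟩ := hl
    obtain ⟨l', ⟨hc', hh', hl'⟩, hnd', hw⟩ := dir1 hsimple hpos hx hy hch hhead hlast hnd
    exact ⟨l', ⟨⟨hc', hh', hl'⟩, hnd'⟩, hw⟩
  · intro x y l' hx hy hl'
    obtain ⟨⟨hch, hhead, hlast⟩, hnd⟩ := hl'
    obtain ⟨l, ⟨hc', hh', hla'⟩, hnd', hw⟩ := dir2 hsimple hpos hx hy hch hhead hlast hnd
    exact ⟨l, ⟨⟨hc', hh', hla'⟩, hnd'⟩, hw⟩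
end

section
/- Let G be an (s,t)-layered graph, P* a next-to-shortest s-to-t path with back-edge decomposition (A,B; P*_1, P*_0, P*_2), and suppose u is an internal vertex of P*_0 with d(s,u) ≤ d(s,B). Then the walk W obtained by concatenating a forward path from s to u, the subpath of P*_0 from u to B, and P*_2 is a simple s-to-t path with w(W) > d(s,t) and w(W) < w(P*), contradicting minimality of P*. Hence every internal vertex u of P*_0 satisfies d(s,u) > d(s,B). -/
variable {V : Type*}

section genhelpers
variable {α : Type*}

private lemma head?_append_ne (xs ys : List α) (h : xs ≠ []) : (xs ++ ys).head? = xs.head? := by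
  cases xs with
  | nil => exact absurd rfl h
  | cons a t => rfl

private lemma head?_mid (xs : List α) (y : α) (ys zs : List α) :
    (xs ++ y :: ys).head? = (xs ++ y :: zs).head? := by
  cases xs <;> rfl

private lemma getLast?_append_ne (xs ys : List α) (h : ys ≠ []) :
    (xs ++ ys).getLast? = ys.getLast? := by
  obtain ⟨a, t, rfl⟩ := List.exists_cons_of_ne_nil h
  rw [List.getLast?_append]
  cases hgt : (a :: t).getLast? with
  | none => simp at hgt
  | some b => rfl

private lemma getLast?_glue : ∀ (xs : List α) (v : α) (ys : List α),
    xs.getLast? = some v → (xs ++ ys).getLast? = (v :: ys).getLast?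
  | [], v, ys, h => by simp at h
  | [a], v, ys, h => by
      simp only [List.getLast?_singleton, Option.some.injEq] at h
      subst h; rfl
  | a :: b :: xs, v, ys, h => by
      rw [List.getLast?_cons_cons] at h
      have ih := getLast?_glue (b :: xs) v ys h
      show ((a :: b :: xs) ++ ys).getLast? = _
      have h2 : (a :: b :: xs) ++ ys = a :: ((b :: xs) ++ ys) := rfl
      rw [h2]
      have h3 : (b :: xs) ++ ys = b :: (xs ++ ys) := rfl
      rw [h3, List.getLast?_cons_cons, ← h3, ih]

private lemma mem_of_head? {l : List α} {a : α} (h : l.head? = some a) : a ∈ l := by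
  cases l with
  | nil => simp at h
  | cons b t => simp at h; subst h; exact List.mem_cons_self

private lemma mem_of_getLast? {l : List α} {a : α} (h : l.getLast? = some a) : a ∈ l := by
  obtain ⟨ys, rfl⟩ := List.getLast?_eq_some_iff.mp h
  simp
end genhelpers

section helpers

variable {E : V → V → Prop} {w d : V → V → ℝ} {s : V}

private lemma listEdges_concat_ne (xs : List V) (h : xs ≠ []) (v : V) :
    listEdges (xs ++ [v]) ≠ [] := by
  obtain ⟨a, t, rfl⟩ := List.exists_cons_of_ne_nil h
  cases ht : t ++ [v] with
  | nil => simp at ht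
  | cons c cs =>
      have h2 : (a :: t) ++ [v] = a :: c :: cs := by rw [List.cons_append, ht]
      rw [h2]
      simp [listEdges]


private lemma walkWt_glue (w : V → V → ℝ) : ∀ (xs : List V) (v : V) (ys : List V),
    xs.getLast? = some v → walkWt w (xs ++ ys) = walkWt w xs + walkWt w (v :: ys)
  | [], v, ys, h => by simp at h
  | [a], v, ys, h => by
      simp only [List.getLast?_singleton, Option.some.injEq] at h
      subst h
      simp [walkWt]
  | a :: b :: xs, v, ys, h => by
      rw [List.getLast?_cons_cons] at h
      have ih := walkWt_glue w (b :: xs) v ys h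
      show w a b + walkWt w (b :: (xs ++ ys)) = (w a b + walkWt w (b :: xs)) + walkWt w (v :: ys)
      have : b :: (xs ++ ys) = (b :: xs) ++ ys := rfl
      rw [this, ih]
      ring

private lemma listEdges_glue : ∀ (xs : List V) (v : V) (ys : List V),
    xs.getLast? = some v → listEdges (xs ++ ys) = listEdges xs ++ listEdges (v :: ys)
  | [], v, ys, h => by simp at h
  | [a], v, ys, h => by
      simp only [List.getLast?_singleton, Option.some.injEq] at h
      subst h
      simp [listEdges]
  | a :: b :: xs, v, ys, h => by
      rw [List.getLast?_cons_cons] at h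
      have ih := listEdges_glue (b :: xs) v ys h
      show (a, b) :: listEdges (b :: (xs ++ ys)) = ((a, b) :: listEdges (b :: xs)) ++ _
      have : b :: (xs ++ ys) = (b :: xs) ++ ys := rfl
      rw [this, ih]
      rfl

private lemma edges_mem_chain : ∀ (l : List V), List.Chain' E l → ∀ p ∈ listEdges l, E p.1 p.2
  | [], _, p, hp => by simp [listEdges] at hp
  | [_], _, p, hp => by simp [listEdges] at hp
  | a :: b :: rest, hch, p, hp => by
      rcases (by simpa [listEdges] using hp : p = (a, b) ∨ p ∈ listEdges (b :: rest)) with h | h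
      · subst h; exact (List.isChain_cons_cons.mp hch).1
      · exact edges_mem_chain (b :: rest) (List.isChain_cons_cons.mp hch).2 p h

private lemma walkWt_nonneg (hpos : ∀ u v, E u v → 0 < w u v) :
    ∀ (l : List V), List.Chain' E l → 0 ≤ walkWt w l
  | [], _ => le_refl _
  | [_], _ => le_refl _
  | a :: b :: rest, hch => by
      have h1 := hpos a b (List.isChain_cons_cons.mp hch).1
      have h2 := walkWt_nonneg hpos (b :: rest) (List.isChain_cons_cons.mp hch).2
      show 0 ≤ w a b + walkWt w (b :: rest)
      linarith

private lemma tele_ge (htri : ∀ x y, E x y → d s y ≤ d s x + w x y) :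
    ∀ (l : List V) (a b : V), List.Chain' E l → l.head? = some a → l.getLast? = some b →
      d s b - d s a ≤ walkWt w l
  | [], a, b, _, hh, _ => by simp at hh
  | [x], a, b, _, hh, hg => by
      simp only [List.head?_cons, Option.some.injEq] at hh
      simp only [List.getLast?_singleton, Option.some.injEq] at hg
      subst hh; subst hg
      simp [walkWt]
  | x :: y :: rest, a, b, hch, hh, hg => by
      simp only [List.head?_cons, Option.some.injEq] at hh
      subst hh
      rw [List.getLast?_cons_cons] at hg
      have hE := (List.isChain_cons_cons.mp hch).1
      have ih := tele_ge htri (y :: rest) y b (List.isChain_cons_cons.mp hch).2 rfl hg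
      have := htri x y hE
      show d s b - d s x ≤ w x y + walkWt w (y :: rest)
      linarith

private lemma tele_gt (htri : ∀ x y, E x y → d s y ≤ d s x + w x y) :
    ∀ (l : List V) (a b : V), List.Chain' E l → l.head? = some a → l.getLast? = some b →
      (∃ p ∈ listEdges l, IsBackEdge E w d s p) →
      d s b - d s a < walkWt w l
  | [], a, b, _, hh, _, _ => by simp at hh
  | [x], a, b, _, _, _, hbk => by
      obtain ⟨p, hp, _⟩ := hbk
      simp [listEdges] at hp
  | x :: y :: rest, a, b, hch, hh, hg, hbk => by
      simp only [List.head?_cons, Option.some.injEq] at hh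
      subst hh
      rw [List.getLast?_cons_cons] at hg
      have hE := (List.isChain_cons_cons.mp hch).1
      have hch' := (List.isChain_cons_cons.mp hch).2
      obtain ⟨p, hp, hpb⟩ := hbk
      show d s b - d s x < w x y + walkWt w (y :: rest)
      rcases (by simpa [listEdges] using hp : p = (x, y) ∨ p ∈ listEdges (y :: rest)) with h | h
      · subst h
        have h1 : d s y < d s x + w x y := hpb.2
        have h2 := tele_ge htri (y :: rest) y b hch' rfl hg
        linarith
      · have h1 := htri x y hE
        have h2 := tele_gt htri (y :: rest) y b hch' rfl hg ⟨p, h, hpb⟩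
        linarith

private lemma tele_eq :
    ∀ (l : List V) (a b : V), List.Chain' E l → l.head? = some a → l.getLast? = some b →
      (∀ p ∈ listEdges l, IsForwardEdge E w d s p) →
      walkWt w l = d s b - d s a
  | [], a, b, _, hh, _, _ => by simp at hh
  | [x], a, b, _, hh, hg, _ => by
      simp only [List.head?_cons, Option.some.injEq] at hh
      simp only [List.getLast?_singleton, Option.some.injEq] at hg
      subst hh; subst hg
      simp [walkWt]
  | x :: y :: rest, a, b, hch, hh, hg, hfwd => by
      simp only [List.head?_cons, Option.some.injEq] at hh
      subst hh
      rw [List.getLast?_cons_cons] at hg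
      have hfe : IsForwardEdge E w d s (x, y) := hfwd (x, y) (by simp [listEdges])
      have ih := tele_eq (y :: rest) y b (List.isChain_cons_cons.mp hch).2 rfl hg
        (fun p hp => hfwd p (by simp [listEdges]; right; exact hp))
      have h1 : d s x + w x y = d s y := hfe.2
      show w x y + walkWt w (y :: rest) = d s b - d s x
      rw [ih]; linarith

private lemma listEdges_append_right : ∀ (xs : List V) (y : V) (ys : List V),
    listEdges (y :: ys) ⊆ listEdges (xs ++ y :: ys)
  | [], _, _ => by exact fun p hp => hp
  | [a], y, ys => by
      intro p hp
      show p ∈ listEdges (a :: y :: ys)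
      simp [listEdges]
      right; exact hp
  | a :: b :: xs, y, ys => by
      intro p hp
      have := listEdges_append_right (b :: xs) y ys hp
      show p ∈ (a, b) :: listEdges ((b :: xs) ++ y :: ys)
      simp only [List.mem_cons]
      right; exact this

private lemma fwd_head_lt (hpos : ∀ u v, E u v → 0 < w u v) :
    ∀ (a : V) (L : List V), List.Chain' E (a :: L) →
      (∀ p ∈ listEdges (a :: L), IsForwardEdge E w d s p) → ∀ x ∈ L, d s a < d s x
  | a, [], _, _, x, hx => by simp at hx
  | a, b :: L, hch, hfwd, x, hx => by
      have hfe : IsForwardEdge E w d s (a, b) := hfwd (a, b) (by simp [listEdges])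
      have hab : d s a < d s b := by
        have h1 := hpos a b hfe.1
        have h2 : d s a + w a b = d s b := hfe.2
        linarith
      rcases List.mem_cons.mp hx with h | h
      · subst h; exact hab
      · exact lt_trans hab (fwd_head_lt hpos b L (List.isChain_cons_cons.mp hch).2
          (fun p hp => hfwd p (by simp [listEdges]; right; exact hp)) x h)

private lemma fwd_strict (hpos : ∀ u v, E u v → 0 < w u v) :
    ∀ (D : List V) (v : V), List.Chain' E (D ++ [v]) →
      (∀ p ∈ listEdges (D ++ [v]), IsForwardEdge E w d s p) → ∀ x ∈ D, d s x < d s v := by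
  intro D v hch hfwd x hx
  obtain ⟨D₁, D₂, rfl⟩ := List.append_of_mem hx
  have heq : (D₁ ++ x :: D₂) ++ [v] = D₁ ++ x :: (D₂ ++ [v]) := by simp
  have hsfx : (x :: (D₂ ++ [v])) <:+ ((D₁ ++ x :: D₂) ++ [v]) := ⟨D₁, heq.symm⟩
  have hch' := hch.suffix hsfx
  have hsub := listEdges_append_right D₁ x (D₂ ++ [v])
  exact fwd_head_lt hpos x (D₂ ++ [v]) hch'
    (fun p hp => hfwd p (by rw [heq]; exact hsub hp)) v (by simp)

end helpers

/-- for a next-to-shortest path with back-edge decomposition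
`(A, B; l1, l0, l2)`, if an internal vertex `u` of `l0` had `d(s,u) ≤ d(s,B)` then the walk
`W = (forward path s → u) ∘ (l0 from u to B) ∘ l2` would be a simple `s → t` path with
`d(s,t) < w(W) < w(P*)`; hence every internal vertex of `l0` satisfies `d(s,u) > d(s,B)`. -/
theorem stmt11 (E : V → V → Prop) (w d : V → V → ℝ) (s t A B u : V)
    (l l1 l0 l2 l0a l0b F : List V)
    (hpos : PosWeights E w) (hd : IsDistFn E w d)
    (hL : IsLayered E w d s t)
    (hP : IsNextToShortest E w d s t l)
    (hdec : IsBEDecomp E w d s t l l1 l0 l2 A B)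
    (hsplit : l0 = l0a ++ u :: l0b)
    (huA : u ≠ A) (huB : u ≠ B)
    (hud : d s u ≤ d s B)
    (hF : IsPathFrom E s u F) (hFf : IsForwardPath E w d s F) :
    (IsPathFrom E s t (F ++ l0b ++ l2.tail) ∧
      d s t < walkWt w (F ++ l0b ++ l2.tail) ∧
      walkWt w (F ++ l0b ++ l2.tail) < walkWt w l) ∧
    (∀ x ∈ l0, x ≠ A → x ≠ B → d s B < d s x) := by
  obtain ⟨⟨hlpath, hlgt⟩, hmin⟩ := hP
  obtain ⟨hl1p, hl0p, hl2p, hldecomp, hl1nb, hl2nb, ⟨p₁, hp₁head, hp₁back⟩,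
    ⟨p₂, hp₂last, hp₂back⟩⟩ := hdec
  obtain ⟨⟨hch1, hh1, hg1⟩, hnd1⟩ := hl1p
  obtain ⟨⟨hch0, hh0, hg0⟩, hnd0⟩ := hl0p
  obtain ⟨⟨hch2, hh2, hg2⟩, hnd2⟩ := hl2p
  obtain ⟨⟨hchl, hhl, hgl⟩, hndl⟩ := hlpath
  have hss : d s s = 0 := by have := hL.1.1 s; linarith
  -- existence of a path from s to any vertex
  have hpathx : ∀ x : V, ∃ lx, IsPathFrom E s x lx := by
    intro x
    obtain ⟨L, hLp, hxL, _⟩ := hL.1.2 x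
    obtain ⟨L₁, L₂, rfl⟩ := List.append_of_mem hxL
    obtain ⟨⟨hchL, hhL, hgL⟩, hndL⟩ := hLp
    refine ⟨L₁ ++ [x], ⟨?_, ?_, List.getLast?_concat⟩, ?_⟩
    · have h2 : List.Chain' E ((L₁ ++ [x]) ++ L₂) := by
        have h3 : (L₁ ++ [x]) ++ L₂ = L₁ ++ x :: L₂ := by simp
        rw [h3]; exact hchL
      exact (List.isChain_append.mp h2).1
    · rw [head?_mid L₁ x [] L₂]; exact hhL
    · have hsub : (L₁ ++ [x]).Sublist (L₁ ++ x :: L₂) :=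
        List.Sublist.append_left (List.cons_sublist_cons.mpr (List.nil_sublist _)) L₁
      exact hsub.nodup hndL
  -- triangle inequality along edges
  have htri : ∀ x y, E x y → d s y ≤ d s x + w x y := by
    intro x y hxy
    obtain ⟨P, ⟨⟨hchP, hhP, hgP⟩, hndP⟩, hPw⟩ := hd.2 s x (hpathx x)
    have hwxy : 0 < w x y := hpos x y hxy
    by_cases hyP : y ∈ P
    · obtain ⟨Q₁, Q₂, rfl⟩ := List.append_of_mem hyP
      have hassoc : Q₁ ++ y :: Q₂ = (Q₁ ++ [y]) ++ Q₂ := by simp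
      have hchpre : List.Chain' E (Q₁ ++ [y]) :=
        (List.isChain_append.mp (by rw [← hassoc]; exact hchP)).1
      have hchsuf : List.Chain' E (y :: Q₂) := hchP.suffix ⟨Q₁, rfl⟩
      have hhpre : (Q₁ ++ [y]).head? = some s := by rw [head?_mid Q₁ y [] Q₂]; exact hhP
      have hndpre : (Q₁ ++ [y]).Nodup :=
        ((List.Sublist.append_left (List.cons_sublist_cons.mpr (List.nil_sublist _)) Q₁).nodup hndP)
      have h1 : d s y ≤ walkWt w (Q₁ ++ [y]) :=
        hd.1 s y _ ⟨⟨hchpre, hhpre, List.getLast?_concat⟩, hndpre⟩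
      have h2 : walkWt w (Q₁ ++ y :: Q₂) = walkWt w (Q₁ ++ [y]) + walkWt w (y :: Q₂) := by
        rw [hassoc]; exact walkWt_glue w _ y _ (List.getLast?_concat)
      have h3 : 0 ≤ walkWt w (y :: Q₂) := walkWt_nonneg hpos _ hchsuf
      linarith [hPw]
    · have hPne : P ≠ [] := by intro h; rw [h] at hhP; simp at hhP
      have hch' : List.Chain' E (P ++ [y]) := by
        apply List.isChain_append.mpr
        refine ⟨hchP, List.isChain_singleton _, ?_⟩
        intro a ha c hc
        simp only [List.head?_cons, Option.mem_def, Option.some.injEq] at hc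
        rw [hgP] at ha
        simp only [Option.mem_def, Option.some.injEq] at ha
        subst ha; subst hc
        exact hxy
      have hnd' : (P ++ [y]).Nodup := by
        apply List.nodup_append.mpr
        refine ⟨hndP, List.nodup_singleton _, ?_⟩
        intro a haP b hay
        simp at hay; subst hay; exact fun h => hyP (h ▸ haP)
      have hpath' : IsPathFrom E s y (P ++ [y]) :=
        ⟨⟨hch', by rw [head?_append_ne _ _ hPne]; exact hhP, List.getLast?_concat⟩, hnd'⟩
      have h1 := hd.1 s y _ hpath'
      rw [walkWt_glue w P x [y] hgP] at h1
      have h2 : walkWt w (x :: [y]) = w x y + 0 := rfl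
      rw [h2] at h1
      linarith [hPw]
  -- every non-back edge is forward
  have hfwd_nb : ∀ p : V × V, E p.1 p.2 → ¬ IsBackEdge E w d s p → IsForwardEdge E w d s p := by
    intro p hE hnb
    refine ⟨hE, ?_⟩
    have h1 := htri p.1 p.2 hE
    have h2 : ¬ (d s p.2 < d s p.1 + w p.1 p.2) := fun h => hnb ⟨hE, h⟩
    linarith
  -- basic list facts
  have hl0cons : l0 = A :: l0.tail := by
    cases l0 with
    | nil => simp at hh0
    | cons a t =>
        simp only [List.head?_cons, Option.some.injEq] at hh0
        rw [hh0]
        rfl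
  have hl2cons : l2 = B :: l2.tail := by
    cases l2 with
    | nil => simp at hh2
    | cons a t =>
        simp only [List.head?_cons, Option.some.injEq] at hh2
        rw [hh2]
        rfl
  have hl0a_ne : l0a ≠ [] := by
    intro h
    rw [hsplit, h] at hh0
    simp only [List.nil_append, List.head?_cons, Option.some.injEq] at hh0
    exact huA hh0
  have hhl0a : l0a.head? = some A := by
    rw [hsplit, head?_append_ne _ _ hl0a_ne] at hh0; exact hh0
  have hSnd : (u :: l0b).Nodup := by
    rw [hsplit] at hnd0; exact (List.nodup_append.mp hnd0).2.1
  have hl0tail_sub : ∀ x ∈ u :: l0b, x ∈ l0.tail := by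
    intro x hx
    obtain ⟨a, ta, hta⟩ := List.exists_cons_of_ne_nil hl0a_ne
    rw [hsplit, hta]
    show x ∈ (a :: (ta ++ u :: l0b)).tail
    exact List.mem_append_right _ hx
  have hdisj_tail : List.Disjoint l0.tail l2.tail := by
    rw [hldecomp] at hndl
    have h1 := (List.nodup_append.mp hndl).2.2
    intro a ha1 ha2
    exact h1 a (List.mem_append_right _ ha1) a ha2 rfl
  have hnd2t : l2.tail.Nodup := by
    rw [hl2cons] at hnd2
    exact (List.nodup_cons.mp hnd2).2
  -- all edges of l2 are forward
  have hfwd2 : ∀ p ∈ listEdges l2, IsForwardEdge E w d s p :=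
    fun p hp => hfwd_nb p (edges_mem_chain l2 hch2 p hp) (hl2nb p hp)
  have htailgt : ∀ x ∈ l2.tail, d s B < d s x := by
    intro x hx
    refine fwd_head_lt hpos B l2.tail ?_ ?_ x hx
    · rw [← hl2cons]; exact hch2
    · intro p hp
      refine hfwd2 p ?_
      rw [hl2cons]; exact hp
  -- total weight of l
  have hwl : walkWt w l = walkWt w l1 + walkWt w l0 + walkWt w (B :: l2.tail) := by
    rw [hldecomp, List.append_assoc, walkWt_glue w l1 A _ hg1]
    have h4 : A :: (l0.tail ++ l2.tail) = l0 ++ l2.tail := by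
      conv_rhs => rw [hl0cons]
      rfl
    rw [h4, walkWt_glue w l0 B _ hg0]
    ring
  -- the main induction
  have key : ∀ n : ℕ, ∀ G : List V, ∀ v : V, G.length ≤ n →
      List.Chain' E G → G.Nodup → G.head? = some s → G.getLast? = some v →
      (∀ p ∈ listEdges G, IsForwardEdge E w d s p) →
      v ∈ u :: l0b → v ≠ B → d s v ≤ d s B → False := by
    intro n
    induction n with
    | zero =>
        intro G v hlen _ _ hh _ _ _ _ _
        have hGnil : G = [] := List.eq_nil_of_length_eq_zero (Nat.le_zero.mp hlen)
        rw [hGnil] at hh; simp at hh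
    | succ n ih =>
        intro G v hlen hch hnd hh hg hfwd hvS hvB hvd
        obtain ⟨D, rfl⟩ := List.getLast?_eq_some_iff.mp hg
        by_cases hex : ∃ x ∈ D, x ∈ u :: l0b
        · obtain ⟨x, hxD, hxS⟩ := hex
          obtain ⟨D₁, D₂, rfl⟩ := List.append_of_mem hxD
          have heq : (D₁ ++ x :: D₂) ++ [v] = (D₁ ++ [x]) ++ (D₂ ++ [v]) := by simp
          have hxlt : d s x < d s v :=
            fwd_strict hpos (D₁ ++ x :: D₂) v hch hfwd x (List.mem_append_right _ (List.mem_cons_self))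
          refine ih (D₁ ++ [x]) x ?_ ?_ ?_ ?_ (List.getLast?_concat) ?_ hxS ?_ ?_
          · have h5 : ((D₁ ++ x :: D₂) ++ [v]).length ≤ n + 1 := hlen
            simp only [List.length_append, List.length_cons, List.length_singleton] at h5 ⊢
            omega
          · have h5 : List.Chain' E ((D₁ ++ [x]) ++ (D₂ ++ [v])) := by rw [← heq]; exact hch
            exact (List.isChain_append.mp h5).1
          · have h5 : ((D₁ ++ [x]) ++ (D₂ ++ [v])).Nodup := by rw [← heq]; exact hnd
            exact (List.nodup_append.mp h5).1
          · have h3 : D₁ ++ x :: (D₂ ++ [v]) = (D₁ ++ x :: D₂) ++ [v] := by simp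
            rw [show (D₁ ++ [x]) = D₁ ++ x :: ([] : List V) from rfl,
              head?_mid D₁ x [] (D₂ ++ [v]), h3]
            exact hh
          · intro p hp
            apply hfwd
            rw [heq, listEdges_glue (D₁ ++ [x]) x (D₂ ++ [v]) (List.getLast?_concat)]
            exact List.mem_append_left _ hp
          · intro hxB
            rw [hxB] at hxlt
            linarith
          · linarith
        · push_neg at hex
          obtain ⟨S₁, S₂, hS⟩ := List.append_of_mem hvS
          have hl0P : l0 = ((l0a ++ S₁) ++ [v]) ++ S₂ := by rw [hsplit, hS]; simp
          have hgG : (D ++ [v]).getLast? = some v := List.getLast?_concat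
          have hgP : ((l0a ++ S₁) ++ [v]).getLast? = some v := List.getLast?_concat
          have hS₂ne : S₂ ≠ [] := by
            intro h
            rw [hl0P, h, List.append_nil, List.getLast?_concat] at hg0
            exact hvB (by injection hg0)
          have hgvS₂ : (v :: S₂).getLast? = some B := by
            have h5 := hg0
            rw [hl0P, getLast?_glue _ v S₂ hgP] at h5
            exact h5
          have hgS₂ : S₂.getLast? = some B := by
            obtain ⟨a, ta, rfl⟩ := List.exists_cons_of_ne_nil hS₂ne
            rw [List.getLast?_cons_cons] at hgvS₂
            exact hgvS₂
          have hchP : List.Chain' E ((l0a ++ S₁) ++ [v]) :=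
            (List.isChain_append.mp (by rw [← hl0P]; exact hch0)).1
          have hchvS₂ : List.Chain' E (v :: S₂) := by
            apply hch0.suffix
            exact ⟨l0a ++ S₁, by rw [hl0P]; simp⟩
          have hlaS₁ne : l0a ++ S₁ ≠ [] := by
            intro h
            exact hl0a_ne (List.append_eq_nil_iff.mp h).1
          have hheadP : ((l0a ++ S₁) ++ [v]).head? = some A := by
            rw [head?_append_ne _ _ hlaS₁ne, head?_append_ne _ _ hl0a_ne]
            exact hhl0a
          have hE0 : listEdges l0 = listEdges ((l0a ++ S₁) ++ [v]) ++ listEdges (v :: S₂) := by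
            rw [hl0P]
            exact listEdges_glue _ v S₂ hgP
          have hEPne : listEdges ((l0a ++ S₁) ++ [v]) ≠ [] :=
            listEdges_concat_ne (l0a ++ S₁) hlaS₁ne v
          have hp₁P : p₁ ∈ listEdges ((l0a ++ S₁) ++ [v]) := by
            rw [hE0, head?_append_ne _ _ hEPne] at hp₁head
            exact mem_of_head? hp₁head
          have hEvS₂ne : listEdges (v :: S₂) ≠ [] := by
            obtain ⟨a, ta, rfl⟩ := List.exists_cons_of_ne_nil hS₂ne
            simp [listEdges]
          have hp₂S : p₂ ∈ listEdges (v :: S₂) := by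
            rw [hE0, getLast?_append_ne _ _ hEvS₂ne] at hp₂last
            exact mem_of_getLast? hp₂last
          have hGle : ∀ x ∈ D ++ [v], d s x ≤ d s B := by
            intro x hx
            rcases List.mem_append.mp hx with h | h
            · exact le_of_lt (lt_of_lt_of_le (fwd_strict hpos D v hch hfwd x h) hvd)
            · simp at h; rw [h]; exact hvd
          have hS₂sub : ∀ x ∈ S₂, x ∈ u :: l0b := by
            intro x hx
            rw [hS]
            exact List.mem_append_right _ (List.mem_cons_of_mem _ hx)
          have hvS₂nd : (v :: S₂).Nodup := by
            have h5 := hSnd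
            rw [hS] at h5
            exact (List.nodup_append.mp h5).2.1
          obtain ⟨c₀, tc₀, hc₀⟩ := List.exists_cons_of_ne_nil hS₂ne
          have hEvc : E v c₀ := (List.isChain_cons.mp hchvS₂).1 c₀ (by rw [hc₀]; rfl)
          have hch2' : List.Chain' E (B :: l2.tail) := by rw [← hl2cons]; exact hch2
          have hchW : List.Chain' E ((D ++ [v]) ++ (S₂ ++ l2.tail)) := by
            apply List.isChain_append.mpr
            refine ⟨hch, ?_, ?_⟩
            · apply List.isChain_append.mpr
              refine ⟨hchvS₂.tail, hch2'.tail, ?_⟩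
              intro a ha c hc
              rw [hgS₂] at ha
              simp only [Option.mem_def, Option.some.injEq] at ha
              rw [← ha] at *
              exact (List.isChain_cons.mp hch2').1 c hc
            · intro a ha c hc
              rw [hgG] at ha
              simp only [Option.mem_def, Option.some.injEq] at ha
              rw [head?_append_ne _ _ hS₂ne, hc₀] at hc
              simp only [List.head?_cons, Option.mem_def, Option.some.injEq] at hc
              rw [← ha, ← hc] at *
              exact hEvc
          have hheadW : ((D ++ [v]) ++ (S₂ ++ l2.tail)).head? = some s := by
            rw [head?_append_ne _ _ (by simp : D ++ [v] ≠ [])]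
            exact hh
          have hlastW : ((D ++ [v]) ++ (S₂ ++ l2.tail)).getLast? = some t := by
            rw [getLast?_append_ne _ _ (fun h => hS₂ne (List.append_eq_nil_iff.mp h).1)]
            rw [getLast?_glue S₂ B l2.tail hgS₂, ← hl2cons]
            exact hg2
          have hndW : ((D ++ [v]) ++ (S₂ ++ l2.tail)).Nodup := by
            apply List.nodup_append.mpr
            refine ⟨hnd, List.nodup_append.mpr ⟨(List.nodup_cons.mp hvS₂nd).2, hnd2t, ?_⟩, ?_⟩
            · intro a haS b ha2 hab
              subst hab
              exact hdisj_tail (hl0tail_sub a (hS₂sub a haS)) ha2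
            · intro a haG b haR hab
              subst hab
              rcases List.mem_append.mp haR with h | h
              · rcases List.mem_append.mp haG with h' | h'
                · exact hex a h' (hS₂sub a h)
                · simp at h'
                  exact (List.nodup_cons.mp hvS₂nd).1 (h' ▸ h)
              · exact absurd (hGle a haG) (not_le.mpr (htailgt a h))
          have hwl0' : walkWt w l0 = walkWt w ((l0a ++ S₁) ++ [v]) + walkWt w (v :: S₂) := by
            rw [hl0P]
            exact walkWt_glue w _ v S₂ hgP
          have hwW : walkWt w ((D ++ [v]) ++ (S₂ ++ l2.tail)) =
              walkWt w (D ++ [v]) + walkWt w (v :: S₂) + walkWt w (B :: l2.tail) := by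
            rw [walkWt_glue w (D ++ [v]) v _ hgG]
            have h5 : v :: (S₂ ++ l2.tail) = (v :: S₂) ++ l2.tail := rfl
            rw [h5, walkWt_glue w (v :: S₂) B l2.tail hgvS₂]
            ring
          have hwG : walkWt w (D ++ [v]) = d s v - d s s := tele_eq (D ++ [v]) s v hch hh hgG hfwd
          have hwl1ge : d s A - d s s ≤ walkWt w l1 := tele_ge htri l1 s A hch1 hh1 hg1
          have hwPgt : d s v - d s A < walkWt w ((l0a ++ S₁) ++ [v]) :=
            tele_gt htri _ A v hchP hheadP hgP ⟨p₁, hp₁P, hp₁back⟩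
          have hWlt : walkWt w ((D ++ [v]) ++ (S₂ ++ l2.tail)) < walkWt w l := by
            rw [hwW, hwl, hwl0', hwG]
            linarith
          have hEW : listEdges ((D ++ [v]) ++ (S₂ ++ l2.tail)) =
              listEdges (D ++ [v]) ++ (listEdges (v :: S₂) ++ listEdges (B :: l2.tail)) := by
            rw [listEdges_glue (D ++ [v]) v _ hgG]
            have h5 : v :: (S₂ ++ l2.tail) = (v :: S₂) ++ l2.tail := rfl
            rw [h5, listEdges_glue (v :: S₂) B l2.tail hgvS₂]
          have hp₂W : p₂ ∈ listEdges ((D ++ [v]) ++ (S₂ ++ l2.tail)) := by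
            rw [hEW]
            exact List.mem_append_right _ (List.mem_append_left _ hp₂S)
          have hWgt : d s t < walkWt w ((D ++ [v]) ++ (S₂ ++ l2.tail)) := by
            have h5 := tele_gt htri _ s t hchW hheadW hlastW ⟨p₂, hp₂W, hp₂back⟩
            linarith
          have hWns : IsNotShortest E w d s t ((D ++ [v]) ++ (S₂ ++ l2.tail)) :=
            ⟨⟨⟨hchW, hheadW, hlastW⟩, hndW⟩, hWgt⟩
          have h6 := hmin _ hWns
          linarith
  exact (key F.length F u le_rfl hF.1.1 hF.2 hF.1.2.1 hF.1.2.2 hFf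
    (List.mem_cons_self) huB hud).elim
end
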